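/- Fix an integer d ≥ 1 and Λ > Λ' > 0. Let S, T : (ℤ^d → ℝ) → ℝ be measurable, square-integrable with respect to μ_Λ, and nonnegative μ_Λ-almost everywhere. Then ∫ (exp(−I_{Λ,Λ'}(S)(ψ)) − exp(−I_{Λ,Λ'}(T)(ψ)))² dμ_{Λ'}(ψ) ≤ ∫ (S(χ) − T(χ))² dμ_Λ(χ), where I_{Λ,Λ'}(S)(ψ) = −log ∫ exp(−S(φ + ψ)) dμ_{Λ,Λ'}(φ). -/

import Mathlib

open MeasureTheory ProbabilityTheory

/-- The Euclidean norm of a lattice point `n : Fin d → ℤ`. -/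
noncomputable def latticeNorm {d : ℕ} (n : Fin d → ℤ) : ℝ :=
  Real.sqrt (∑ i, ((n i : ℝ)) ^ 2)

/-- The variance `v_Λ(n) = exp(−‖n‖²/Λ)/(2(‖n‖²+1))` of the Gaussian factor at `n`. -/
noncomputable def varCutoff {d : ℕ} (Λ : ℝ) (n : Fin d → ℤ) : NNReal :=
  (Real.exp (-(latticeNorm n ^ 2) / Λ) / (2 * (latticeNorm n ^ 2 + 1))).toNNReal

/-- The variance `v_{Λ,Λ'}(n) = (exp(−‖n‖²/Λ) − exp(−‖n‖²/Λ'))/(2(‖n‖²+1))`. -/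
noncomputable def varCutoffDiff {d : ℕ} (Λ Λ' : ℝ) (n : Fin d → ℤ) : NNReal :=
  ((Real.exp (-(latticeNorm n ^ 2) / Λ) - Real.exp (-(latticeNorm n ^ 2) / Λ')) /
    (2 * (latticeNorm n ^ 2 + 1))).toNNReal

/-- `μ` is the product over `n : Fin d → ℤ` of the centered Gaussian measures on `ℝ` with
variances `v n`, characterized through its values on all measurable cylinder sets. -/
def IsProductGaussian {d : ℕ} (μ : Measure ((Fin d → ℤ) → ℝ))
    (v : (Fin d → ℤ) → NNReal) : Prop :=
  ∀ (F : Finset (Fin d → ℤ)) (B : (Fin d → ℤ) → Set ℝ), (∀ n, MeasurableSet (B n)) →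
    μ {a | ∀ n ∈ F, a n ∈ B n} = ∏ n ∈ F, gaussianReal 0 (v n) (B n)

/-- The integration-out map of the renormalization group:
`I(S)(ψ) = −log ∫ exp(−S(φ+ψ)) dμ(φ)`, where `μ` is the fluctuation measure. -/
noncomputable def integrateOut {d : ℕ} (μ : Measure ((Fin d → ℤ) → ℝ))
    (S : ((Fin d → ℤ) → ℝ) → ℝ) (ψ : (Fin d → ℤ) → ℝ) : ℝ :=
  -Real.log (∫ φ, Real.exp (-S (φ + ψ)) ∂μ)


section Aux

open Real

variable {d : ℕ}

lemma measurable_gaussianPDF2 (v : NNReal) :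
    Measurable (fun p : ℝ × ℝ => gaussianPDF p.1 v p.2) := by
  have : Measurable (fun p : ℝ × ℝ => gaussianPDFReal p.1 v p.2) := by
    simp only [gaussianPDFReal]
    exact ((((measurable_snd.sub measurable_fst).pow_const 2).neg.div_const
      _).exp).const_mul _
  exact this.ennreal_ofReal

lemma gaussianPDFReal_conv_identity {v1 v2 : NNReal} (h1 : v1 ≠ 0) (h2 : v2 ≠ 0) (x t : ℝ) :
    gaussianPDFReal 0 v1 t * gaussianPDFReal t v2 x
      = gaussianPDFReal 0 (v1 + v2) x *
        gaussianPDFReal ((v1 : ℝ) * x / ((v1 : ℝ) + (v2 : ℝ))) (v1 * v2 / (v1 + v2)) t := by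
  have ha : (0:ℝ) < v1 := lt_of_le_of_ne v1.coe_nonneg (by exact_mod_cast (Ne.symm h1))
  have hb : (0:ℝ) < v2 := lt_of_le_of_ne v2.coe_nonneg (by exact_mod_cast (Ne.symm h2))
  set a : ℝ := (v1 : ℝ)
  set b : ℝ := (v2 : ℝ)
  have hab : (0:ℝ) < a + b := by positivity
  have hw : ((v1 * v2 / (v1 + v2) : NNReal) : ℝ) = a * b / (a + b) := by
    push_cast; ring
  have hsum : ((v1 + v2 : NNReal) : ℝ) = a + b := by push_cast; ring
  simp only [gaussianPDFReal, hw, hsum, sub_zero]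
  have h2pi : (0:ℝ) < 2 * π := by positivity
  rw [mul_mul_mul_comm, mul_mul_mul_comm ((√(2 * π * (a+b)))⁻¹)]
  congr 1
  · rw [← mul_inv, ← mul_inv, ← Real.sqrt_mul (by positivity), ← Real.sqrt_mul (by positivity)]
    congr 2
    field_simp
    ring
  · rw [← Real.exp_add, ← Real.exp_add]
    congr 1
    field_simp
    ring

lemma measurable_gaussianReal_eval {v : NNReal} (hv : v ≠ 0) (B : Set ℝ) :
    Measurable (fun t : ℝ => gaussianReal t v B) := by
  simp_rw [gaussianReal_apply _ hv B]
  exact (measurable_gaussianPDF2 v).lintegral_prod_right'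

lemma lintegral_gaussianReal_conv (v1 v2 : NNReal) {B : Set ℝ} (hB : MeasurableSet B) :
    ∫⁻ t, gaussianReal t v2 B ∂(gaussianReal 0 v1) = gaussianReal 0 (v1 + v2) B := by
  by_cases h2 : v2 = 0
  · subst h2
    simp_rw [gaussianReal_zero_var, Measure.dirac_apply' _ hB, add_zero]
    exact lintegral_indicator_one hB
  by_cases h1 : v1 = 0
  · rw [h1, gaussianReal_zero_var, lintegral_dirac' _ (measurable_gaussianReal_eval h2 B),
      zero_add]
  have hsum : v1 + v2 ≠ 0 := fun h => h1 (by simpa using (add_eq_zero.mp h).1)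
  have hw : v1 * v2 / (v1 + v2) ≠ 0 := div_ne_zero (mul_ne_zero h1 h2) hsum
  set m : ℝ → ℝ := fun x => (v1 : ℝ) * x / ((v1 : ℝ) + (v2 : ℝ))
  calc ∫⁻ t, gaussianReal t v2 B ∂(gaussianReal 0 v1)
      = ∫⁻ t, gaussianPDF 0 v1 t * gaussianReal t v2 B ∂(volume : Measure ℝ) := by
        rw [gaussianReal_of_var_ne_zero 0 h1,
          lintegral_withDensity_eq_lintegral_mul _ (measurable_gaussianPDF 0 v1)
            (measurable_gaussianReal_eval h2 B)]
        rfl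
    _ = ∫⁻ t, ∫⁻ x in B, gaussianPDF 0 v1 t * gaussianPDF t v2 x ∂(volume : Measure ℝ)
          ∂(volume : Measure ℝ) := by
        congr 1 with t
        rw [gaussianReal_apply _ h2 B, lintegral_const_mul _ (measurable_gaussianPDF t v2)]
    _ = ∫⁻ x in B, ∫⁻ t, gaussianPDF 0 v1 t * gaussianPDF t v2 x ∂(volume : Measure ℝ)
          ∂(volume : Measure ℝ) := by
        refine lintegral_lintegral_swap ?_
        exact (((measurable_gaussianPDF 0 v1).comp measurable_fst).mul
          (measurable_gaussianPDF2 v2)).aemeasurable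
    _ = ∫⁻ x in B, gaussianPDF 0 (v1 + v2) x ∂(volume : Measure ℝ) := by
        refine lintegral_congr fun x => ?_
        have hpt : ∀ t : ℝ, gaussianPDF 0 v1 t * gaussianPDF t v2 x
            = gaussianPDF 0 (v1 + v2) x * gaussianPDF (m x) (v1 * v2 / (v1 + v2)) t := by
          intro t
          simp only [gaussianPDF]
          rw [← ENNReal.ofReal_mul (gaussianPDFReal_nonneg _ _ _),
            ← ENNReal.ofReal_mul (gaussianPDFReal_nonneg _ _ _),
            gaussianPDFReal_conv_identity h1 h2 x t]
        simp_rw [hpt]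
        rw [lintegral_const_mul _ (measurable_gaussianPDF _ _),
          lintegral_gaussianPDF_eq_one (m x) hw, mul_one]
    _ = gaussianReal 0 (v1 + v2) B := (gaussianReal_apply _ hsum B).symm

lemma lintegral_pi_prod_fin : ∀ {n : ℕ} (μ : Fin n → Measure ℝ)
    [∀ i, IsProbabilityMeasure (μ i)] (w : Fin n → ℝ → ENNReal)
    (_ : ∀ i, Measurable (w i)),
    ∫⁻ x : Fin n → ℝ, ∏ i, w i (x i) ∂Measure.pi μ = ∏ i, ∫⁻ t, w i t ∂μ i := by
  intro n
  induction n with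
  | zero =>
      intro μ _ w hw
      simp only [Finset.univ_eq_empty, Finset.prod_empty, lintegral_const, one_mul]
      simp
  | succ n ih =>
      intro μ _ w hw
      have hmp := (measurePreserving_piFinSuccAbove μ 0).symm
      have hmeas : Measurable fun x : Fin (n+1) → ℝ => ∏ i, w i (x i) :=
        Finset.measurable_prod _ fun i _ => (hw i).comp (measurable_pi_apply i)
      rw [← hmp.lintegral_comp hmeas]
      have hcomp : ∀ y : ℝ × (Fin n → ℝ),
          (∏ i, w i (((MeasurableEquiv.piFinSuccAbove (fun _ => ℝ) 0).symm y) i))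
            = w 0 y.1 * ∏ i : Fin n, w i.succ (y.2 i) := by
        intro y
        simp [Fin.prod_univ_succ, MeasurableEquiv.piFinSuccAbove, Fin.insertNthEquiv,
          Fin.insertNth_zero]
      simp_rw [hcomp]
      have hswap := lintegral_prod_mul (μ := μ 0)
        (ν := Measure.pi fun j => μ (Fin.succAbove 0 j)) (f := w 0)
        (g := fun b : Fin n → ℝ => ∏ i : Fin n, w i.succ (b i)) (hw 0).aemeasurable
        (Finset.measurable_prod _ fun i _ =>
          ((hw i.succ).comp (measurable_pi_apply i))).aemeasurable
      rw [hswap]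
      simp only [Fin.zero_succAbove]
      rw [ih (fun i => μ i.succ) (fun i => w i.succ) (fun i => hw _)]
      rw [Fin.prod_univ_succ]

lemma lintegral_pi_prod {ι : Type*} [Fintype ι] (μ : ι → Measure ℝ)
    [∀ i, IsProbabilityMeasure (μ i)] (w : ι → ℝ → ENNReal)
    (hw : ∀ i, Measurable (w i)) :
    ∫⁻ x : ι → ℝ, ∏ i, w i (x i) ∂Measure.pi μ = ∏ i, ∫⁻ t, w i t ∂μ i := by
  let e := (Fintype.equivFin ι).symm
  have hmeas : Measurable fun x : ι → ℝ => ∏ i, w i (x i) :=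
    Finset.measurable_prod _ fun i _ => (hw i).comp (measurable_pi_apply i)
  rw [← (measurePreserving_piCongrLeft μ e).lintegral_comp hmeas]
  have : ∀ y : Fin (Fintype.card ι) → ℝ,
      (∏ i, w i ((MeasurableEquiv.piCongrLeft (fun _ => ℝ) e y) i))
        = ∏ j, w (e j) (y j) := by
    intro y
    rw [← e.prod_comp]
    refine Finset.prod_congr rfl fun j _ => ?_
    congr 1
    simp [MeasurableEquiv.coe_piCongrLeft, Equiv.piCongrLeft_apply_apply]
  simp_rw [this]
  rw [lintegral_pi_prod_fin _ _ (fun j => hw (e j)), ← e.prod_comp]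

lemma measurable_gaussianReal_eval' (v : NNReal) {B : Set ℝ} (hB : MeasurableSet B) :
    Measurable (fun t : ℝ => gaussianReal t v B) := by
  by_cases hv : v = 0
  · subst hv
    simp_rw [gaussianReal_zero_var, Measure.dirac_apply' _ hB]
    exact measurable_one.indicator hB
  · exact measurable_gaussianReal_eval hv B

lemma measurableSet_prodCyl {F : Finset (Fin d → ℤ)} {B : (Fin d → ℤ) → Set ℝ}
    (hB : ∀ n, MeasurableSet (B n)) :
    MeasurableSet {a : (Fin d → ℤ) → ℝ | ∀ n ∈ F, a n ∈ B n} := by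
  have : {a : (Fin d → ℤ) → ℝ | ∀ n ∈ F, a n ∈ B n}
      = ⋂ n ∈ F, (fun a : (Fin d → ℤ) → ℝ => a n) ⁻¹' B n := by
    ext a; simp
  rw [this]
  exact MeasurableSet.biInter F.countable_toSet
    (fun n _ => (measurable_pi_apply n) (hB n))

lemma IsProductGaussian.isProbabilityMeasure {μ : Measure ((Fin d → ℤ) → ℝ)}
    {v : (Fin d → ℤ) → NNReal} (h : IsProductGaussian μ v) : IsProbabilityMeasure μ := by
  constructor
  have := h ∅ (fun _ => Set.univ) (fun _ => MeasurableSet.univ)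
  simpa using this

lemma IsProductGaussian.map_restrict {μ : Measure ((Fin d → ℤ) → ℝ)}
    {v : (Fin d → ℤ) → NNReal} (h : IsProductGaussian μ v) (F : Finset (Fin d → ℤ)) :
    Measure.map F.restrict μ = Measure.pi (fun i : F => gaussianReal 0 (v i)) := by
  refine (Measure.pi_eq (μ := fun i : F => gaussianReal 0 (v i)) fun s hs => ?_).symm
  rw [Measure.map_apply (F.measurable_restrict) (MeasurableSet.univ_pi hs)]
  classical
  set B : (Fin d → ℤ) → Set ℝ := fun n => if h : n ∈ F then s ⟨n, h⟩ else Set.univ with hBdef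
  have hset : F.restrict ⁻¹' Set.univ.pi s = {a : (Fin d → ℤ) → ℝ | ∀ n ∈ F, a n ∈ B n} := by
    ext a
    simp only [Set.mem_preimage, Set.mem_univ_pi, Set.mem_setOf_eq, Finset.restrict, hBdef]
    constructor
    · intro hall n hn; rw [dif_pos hn]; exact hall ⟨n, hn⟩
    · intro hall i; have := hall i i.2; rwa [dif_pos i.2] at this
  have hBm : ∀ n, MeasurableSet (B n) := by
    intro n
    by_cases hn : n ∈ F
    · simp only [hBdef, dif_pos hn]; exact hs _
    · simp only [hBdef, dif_neg hn]; exact MeasurableSet.univ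
  rw [hset, h F B hBm, ← Finset.prod_coe_sort]
  refine Finset.prod_congr rfl fun i _ => ?_
  have : B ↑i = s i := by
    simp only [hBdef, dif_pos i.2]
  rw [this]

lemma IsProductGaussian.unique {μ μ₂ : Measure ((Fin d → ℤ) → ℝ)}
    {v : (Fin d → ℤ) → NNReal} (h : IsProductGaussian μ v)
    (h₂ : IsProductGaussian μ₂ v) : μ = μ₂ := by
  haveI hp := h.isProbabilityMeasure
  haveI hp₂ := h₂.isProbabilityMeasure
  refine ext_of_generate_finite _ generateFrom_measurableCylinders.symm
    isPiSystem_measurableCylinders ?_ ?_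
  · intro t ht
    obtain ⟨F, Sset, hSm, rfl⟩ := (mem_measurableCylinders t).mp ht
    show μ (F.restrict ⁻¹' Sset) = μ₂ (F.restrict ⁻¹' Sset)
    rw [← Measure.map_apply F.measurable_restrict hSm,
      ← Measure.map_apply F.measurable_restrict hSm, h.map_restrict F, h₂.map_restrict F]
  · simp

lemma measurable_addPi :
    Measurable (fun p : ((Fin d → ℤ) → ℝ) × ((Fin d → ℤ) → ℝ) => p.1 + p.2) :=
  measurable_fst.add measurable_snd

lemma IsProductGaussian.conv {μ1 μ2 : Measure ((Fin d → ℤ) → ℝ)}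
    {v1 v2 : (Fin d → ℤ) → NNReal}
    (h1 : IsProductGaussian μ1 v1) (h2 : IsProductGaussian μ2 v2) :
    IsProductGaussian (Measure.map (fun p => p.1 + p.2) (μ1.prod μ2))
      (fun n => v1 n + v2 n) := by
  haveI hp1 := h1.isProbabilityMeasure
  haveI hp2 := h2.isProbabilityMeasure
  intro F B hB
  have hcyl := measurableSet_prodCyl (F := F) hB
  rw [Measure.map_apply measurable_addPi hcyl,
    Measure.prod_apply (measurable_addPi hcyl)]
  set w : (Fin d → ℤ) → ℝ → ENNReal := fun n t => gaussianReal t (v2 n) (B n) with hwdef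
  have hinner : ∀ ψ : (Fin d → ℤ) → ℝ,
      μ2 (Prod.mk ψ ⁻¹' ((fun p : ((Fin d → ℤ) → ℝ) × ((Fin d → ℤ) → ℝ) => p.1 + p.2) ⁻¹'
        {a | ∀ n ∈ F, a n ∈ B n})) = ∏ n ∈ F, w n (ψ n) := by
    intro ψ
    have hpre : Prod.mk ψ ⁻¹' ((fun p : ((Fin d → ℤ) → ℝ) × ((Fin d → ℤ) → ℝ) => p.1 + p.2) ⁻¹'
        {a | ∀ n ∈ F, a n ∈ B n})
        = {φ : (Fin d → ℤ) → ℝ | ∀ n ∈ F, φ n ∈ (fun x => ψ n + x) ⁻¹' B n} := by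
      ext φ; simp [Pi.add_apply]
    rw [hpre, h2 F _ (fun n => (hB n).preimage (measurable_const_add _))]
    refine Finset.prod_congr rfl fun n _ => ?_
    rw [hwdef]
    have : gaussianReal 0 (v2 n) ((fun x => ψ n + x) ⁻¹' B n)
        = ((gaussianReal 0 (v2 n)).map (ψ n + ·)) (B n) := by
      rw [Measure.map_apply (measurable_const_add _) (hB n)]
    rw [this, gaussianReal_map_const_add, zero_add]
  simp_rw [hinner]
  have hwm : ∀ n, Measurable (w n) := fun n => measurable_gaussianReal_eval' (v2 n) (hB n)
  have hrepr : ∀ ψ : (Fin d → ℤ) → ℝ,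
      ∏ n ∈ F, w n (ψ n) = ∏ i : F, w i (F.restrict ψ i) := by
    intro ψ
    rw [← Finset.prod_coe_sort]
    rfl
  simp_rw [hrepr]
  set f : ({ x // x ∈ F } → ℝ) → ENNReal :=
    fun g => ∏ i : { x // x ∈ F }, w (↑i) (g i) with hfdef
  have hfm : Measurable f :=
    Finset.measurable_prod _ fun i _ => (hwm i).comp (measurable_pi_apply i)
  calc ∫⁻ x, f (F.restrict x) ∂μ1
      = ∫⁻ y, f y ∂(Measure.map F.restrict μ1) :=
        (lintegral_map hfm F.measurable_restrict).symm
    _ = ∫⁻ y, f y ∂(Measure.pi fun i : F => gaussianReal 0 (v1 i)) := by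
        rw [h1.map_restrict]
    _ = ∏ i : F, ∫⁻ t, w ↑i t ∂(gaussianReal 0 (v1 ↑i)) :=
        lintegral_pi_prod _ _ (fun i => hwm ↑i)
    _ = ∏ i : F, gaussianReal 0 (v1 ↑i + v2 ↑i) (B ↑i) := by
        refine Finset.prod_congr rfl fun i _ => ?_
        rw [hwdef]
        exact lintegral_gaussianReal_conv (v1 ↑i) (v2 ↑i) (hB ↑i)
    _ = ∏ n ∈ F, gaussianReal 0 (v1 n + v2 n) (B n) :=
        Finset.prod_coe_sort F (fun n => gaussianReal 0 (v1 n + v2 n) (B n))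

lemma latticeNorm_sq_nonneg {d : ℕ} (n : Fin d → ℤ) : 0 ≤ latticeNorm n ^ 2 := sq_nonneg _

lemma varCutoff_add {d : ℕ} {Λ Λ' : ℝ} (hΛ' : 0 < Λ') (hΛ : Λ' < Λ) (n : Fin d → ℤ) :
    varCutoff Λ' n + varCutoffDiff Λ Λ' n = varCutoff Λ n := by
  set x := latticeNorm n ^ 2 with hx
  have hx0 : 0 ≤ x := sq_nonneg _
  have hden : (0:ℝ) < 2 * (x + 1) := by positivity
  have hmono : Real.exp (-x / Λ') ≤ Real.exp (-x / Λ) := by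
    apply Real.exp_le_exp.mpr
    rw [neg_div, neg_div, neg_le_neg_iff]
    exact div_le_div_of_nonneg_left hx0 hΛ' hΛ.le
  unfold varCutoff varCutoffDiff
  rw [← Real.toNNReal_add (by positivity)
    (div_nonneg (sub_nonneg.mpr hmono) hden.le)]
  rw [← add_div, add_sub_cancel]

lemma exp_neg_sub_sq_le {s t : ℝ} (hs : 0 ≤ s) (ht : 0 ≤ t) :
    (Real.exp (-s) - Real.exp (-t)) ^ 2 ≤ (s - t) ^ 2 := by
  have key : ∀ a b : ℝ, 0 ≤ a → a ≤ b → Real.exp (-a) - Real.exp (-b) ≤ b - a := by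
    intro a b ha hab
    have h1 : Real.exp (-b) = Real.exp (-a) * Real.exp (-(b - a)) := by
      rw [← Real.exp_add]; ring_nf
    have h2 : 1 - (b - a) ≤ Real.exp (-(b - a)) := by
      have := Real.add_one_le_exp (-(b - a)); linarith
    have h3 : Real.exp (-a) ≤ 1 := by
      simpa using Real.exp_le_exp.mpr (neg_nonpos.mpr ha)
    nlinarith [Real.exp_pos (-a)]
  rcases le_total s t with h | h
  · have k := key s t hs h
    have hd : 0 ≤ Real.exp (-s) - Real.exp (-t) :=
      sub_nonneg.mpr (Real.exp_le_exp.mpr (neg_le_neg h))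
    nlinarith
  · have k := key t s ht h
    have hd : 0 ≤ Real.exp (-t) - Real.exp (-s) :=
      sub_nonneg.mpr (Real.exp_le_exp.mpr (neg_le_neg h))
    nlinarith


end Aux

set_option maxHeartbeats 2000000 in
/-- For nonnegative square-integrable `S, T`, the exponentials of the integrated-out
actions satisfy `∫ (e^{−I(S)} − e^{−I(T)})² dμ_{Λ'} ≤ ∫ (S − T)² dμ_Λ`. -/
theorem exp_integrateOut_lipschitz {d : ℕ} (hd : 1 ≤ d) {Λ Λ' : ℝ}
    (hΛ' : 0 < Λ') (hΛ : Λ' < Λ)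
    (μΛ μΛ' μΛΛ' : Measure ((Fin d → ℤ) → ℝ))
    (hμΛ : IsProductGaussian μΛ (varCutoff Λ))
    (hμΛ' : IsProductGaussian μΛ' (varCutoff Λ'))
    (hμΛΛ' : IsProductGaussian μΛΛ' (varCutoffDiff Λ Λ'))
    (S T : ((Fin d → ℤ) → ℝ) → ℝ) (hSmeas : Measurable S) (hTmeas : Measurable T)
    (hS2 : Integrable (fun χ => S χ ^ 2) μΛ) (hT2 : Integrable (fun χ => T χ ^ 2) μΛ)
    (hS0 : ∀ᵐ χ ∂μΛ, 0 ≤ S χ) (hT0 : ∀ᵐ χ ∂μΛ, 0 ≤ T χ) :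
    ∫ ψ, (Real.exp (-integrateOut μΛΛ' S ψ) - Real.exp (-integrateOut μΛΛ' T ψ)) ^ 2 ∂μΛ'
      ≤ ∫ χ, (S χ - T χ) ^ 2 ∂μΛ := by
  haveI hp1 := hμΛ.isProbabilityMeasure
  haveI hp2 := hμΛ'.isProbabilityMeasure
  haveI hp3 := hμΛΛ'.isProbabilityMeasure
  -- the convolution identity
  have hconv : Measure.map
      (fun p : (((Fin d → ℤ) → ℝ)) × (((Fin d → ℤ) → ℝ)) => p.1 + p.2)
      (μΛ'.prod μΛΛ') = μΛ := by
    have h := hμΛ'.conv hμΛΛ'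
    have hv : (fun n : Fin d → ℤ => varCutoff Λ' n + varCutoffDiff Λ Λ' n) = varCutoff Λ :=
      funext fun n => varCutoff_add hΛ' hΛ n
    rw [hv] at h
    exact h.unique hμΛ
  -- the good set
  set G : Set ((Fin d → ℤ) → ℝ) := {χ | 0 ≤ S χ ∧ 0 ≤ T χ} with hGdef
  have hGm : MeasurableSet G := by
    rw [hGdef, Set.setOf_and]
    exact (measurableSet_le measurable_const hSmeas).inter
      (measurableSet_le measurable_const hTmeas)
  have hGc : μΛ Gᶜ = 0 := by
    have h := hS0.and hT0
    rw [ae_iff] at h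
    simpa [hGdef, Set.compl_setOf] using h
  -- a.e. transfer of goodness
  have haeG : ∀ᵐ ψ ∂μΛ', ∀ᵐ φ ∂μΛΛ', ψ + φ ∈ G := by
    have hindm : Measurable (fun χ : (Fin d → ℤ) → ℝ =>
        Gᶜ.indicator (1 : (((Fin d → ℤ) → ℝ)) → ENNReal) χ) := measurable_const.indicator hGm.compl
    have hme : Measurable (fun p : (((Fin d → ℤ) → ℝ)) × (((Fin d → ℤ) → ℝ)) =>
        Gᶜ.indicator (1 : (((Fin d → ℤ) → ℝ)) → ENNReal) (p.1 + p.2)) := hindm.comp measurable_addPi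
    have hzero : ∫⁻ ψ, ∫⁻ φ, Gᶜ.indicator (1 : (((Fin d → ℤ) → ℝ)) → ENNReal) (ψ + φ) ∂μΛΛ' ∂μΛ' = 0 := by
      calc ∫⁻ ψ, ∫⁻ φ, Gᶜ.indicator (1 : (((Fin d → ℤ) → ℝ)) → ENNReal) (ψ + φ) ∂μΛΛ' ∂μΛ'
          = ∫⁻ p, Gᶜ.indicator (1 : (((Fin d → ℤ) → ℝ)) → ENNReal) (p.1 + p.2) ∂(μΛ'.prod μΛΛ') :=
            (lintegral_prod _ hme.aemeasurable).symm
        _ = ∫⁻ χ, Gᶜ.indicator (1 : (((Fin d → ℤ) → ℝ)) → ENNReal) χ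
              ∂(Measure.map (fun p : (((Fin d → ℤ) → ℝ)) × (((Fin d → ℤ) → ℝ)) =>
                p.1 + p.2) (μΛ'.prod μΛΛ')) :=
            (lintegral_map hindm measurable_addPi).symm
        _ = 0 := by rw [hconv, lintegral_indicator_one hGm.compl, hGc]
    have h1 := (lintegral_eq_zero_iff (Measurable.lintegral_prod_right' hme)).mp hzero
    filter_upwards [h1] with ψ hψ
    have hψ' : ∫⁻ φ, Gᶜ.indicator (1 : (((Fin d → ℤ) → ℝ)) → ENNReal) (ψ + φ) ∂μΛΛ' = 0 := hψ
    have h2 := (lintegral_eq_zero_iff (hindm.comp (measurable_const_add ψ))).mp hψ'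
    filter_upwards [h2] with φ hφ
    by_contra hmem
    have : Gᶜ.indicator (1 : (((Fin d → ℤ) → ℝ)) → ENNReal) (ψ + φ) = 1 :=
      Set.indicator_of_mem (Set.mem_compl hmem) _
    simp only [Function.comp_apply, Pi.zero_apply] at hφ
    rw [this] at hφ
    exact one_ne_zero hφ
  -- abbreviations
  have haddm : ∀ ψ : (Fin d → ℤ) → ℝ, Measurable (fun φ : (Fin d → ℤ) → ℝ => ψ + φ) :=
    fun ψ => measurable_const_add ψ
  set f : ((Fin d → ℤ) → ℝ) → ℝ := fun χ => Real.exp (-S χ) with hfdef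
  set g : ((Fin d → ℤ) → ℝ) → ℝ := fun χ => Real.exp (-T χ) with hgdef
  have hfm : Measurable f := hSmeas.neg.exp
  have hgm : Measurable g := hTmeas.neg.exp
  have hfgm : Measurable (fun χ => (f χ - g χ) ^ 2) := (hfm.sub hgm).pow_const 2
  have hfb : ∀ χ ∈ G, 0 < f χ ∧ f χ ≤ 1 := by
    intro χ hχ
    refine ⟨Real.exp_pos _, ?_⟩
    have h := Real.exp_le_exp.mpr (neg_nonpos.mpr hχ.1)
    rw [Real.exp_zero] at h
    exact h
  have hgb : ∀ χ ∈ G, 0 < g χ ∧ g χ ≤ 1 := by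
    intro χ hχ
    refine ⟨Real.exp_pos _, ?_⟩
    have h := Real.exp_le_exp.mpr (neg_nonpos.mpr hχ.2)
    rw [Real.exp_zero] at h
    exact h
  -- the key pointwise (in ψ) estimate
  have hmain : ∀ᵐ ψ ∂μΛ',
      (Real.exp (-integrateOut μΛΛ' S ψ) - Real.exp (-integrateOut μΛΛ' T ψ)) ^ 2
          ≤ ∫ φ, (f (ψ + φ) - g (ψ + φ)) ^ 2 ∂μΛΛ' ∧
        (Real.exp (-integrateOut μΛΛ' S ψ) - Real.exp (-integrateOut μΛΛ' T ψ)) ^ 2 ≤ 1 := by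
    filter_upwards [haeG] with ψ hψ
    have hfS : Integrable (fun φ => f (ψ + φ)) μΛΛ' := by
      refine Integrable.mono' (integrable_const 1)
        ((hfm.comp (haddm ψ)).aestronglyMeasurable) ?_
      filter_upwards [hψ] with φ hφ
      rw [Real.norm_eq_abs, abs_of_pos (hfb _ hφ).1]
      exact (hfb _ hφ).2
    have hgS : Integrable (fun φ => g (ψ + φ)) μΛΛ' := by
      refine Integrable.mono' (integrable_const 1)
        ((hgm.comp (haddm ψ)).aestronglyMeasurable) ?_
      filter_upwards [hψ] with φ hφ
      rw [Real.norm_eq_abs, abs_of_pos (hgb _ hφ).1]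
      exact (hgb _ hφ).2
    have hGSpos : 0 < ∫ φ, f (ψ + φ) ∂μΛΛ' := by
      rw [integral_pos_iff_support_of_nonneg_ae
        (Filter.Eventually.of_forall fun φ => (Real.exp_pos _).le) hfS]
      have hsupp : Function.support (fun φ => f (ψ + φ)) = Set.univ :=
        Set.eq_univ_of_forall fun φ => Function.mem_support.mpr (ne_of_gt (Real.exp_pos _))
      rw [hsupp]
      simp
    have hGTpos : 0 < ∫ φ, g (ψ + φ) ∂μΛΛ' := by
      rw [integral_pos_iff_support_of_nonneg_ae
        (Filter.Eventually.of_forall fun φ => (Real.exp_pos _).le) hgS]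
      have hsupp : Function.support (fun φ => g (ψ + φ)) = Set.univ :=
        Set.eq_univ_of_forall fun φ => Function.mem_support.mpr (ne_of_gt (Real.exp_pos _))
      rw [hsupp]
      simp
    have hGSle : ∫ φ, f (ψ + φ) ∂μΛΛ' ≤ 1 := by
      have h := integral_mono_ae hfS (integrable_const 1)
        (by filter_upwards [hψ] with φ hφ; exact (hfb _ hφ).2)
      simpa using h
    have hGTle : ∫ φ, g (ψ + φ) ∂μΛΛ' ≤ 1 := by
      have h := integral_mono_ae hgS (integrable_const 1)
        (by filter_upwards [hψ] with φ hφ; exact (hgb _ hφ).2)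
      simpa using h
    have hIS : Real.exp (-integrateOut μΛΛ' S ψ) = ∫ φ, f (ψ + φ) ∂μΛΛ' := by
      rw [integrateOut, neg_neg,
        show (fun φ => Real.exp (-S (φ + ψ))) = fun φ => f (ψ + φ) from
          funext fun φ => by rw [add_comm]]
      exact Real.exp_log hGSpos
    have hIT : Real.exp (-integrateOut μΛΛ' T ψ) = ∫ φ, g (ψ + φ) ∂μΛΛ' := by
      rw [integrateOut, neg_neg,
        show (fun φ => Real.exp (-T (φ + ψ))) = fun φ => g (ψ + φ) from
          funext fun φ => by rw [add_comm]]
      exact Real.exp_log hGTpos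
    constructor
    · have hmem : MemLp (fun φ => f (ψ + φ) - g (ψ + φ)) 2 μΛΛ' := by
        refine MemLp.of_bound
          ((hfm.comp (haddm ψ)).sub (hgm.comp (haddm ψ))).aestronglyMeasurable 1 ?_
        filter_upwards [hψ] with φ hφ
        have h1 := hfb _ hφ; have h2 := hgb _ hφ
        rw [Real.norm_eq_abs]
        exact abs_le.mpr ⟨by linarith [h1.1, h2.2], by linarith [h1.2, h2.1]⟩
      have hvar := variance_nonneg (fun φ => f (ψ + φ) - g (ψ + φ)) μΛΛ'
      rw [variance_eq_sub hmem] at hvar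
      have hsq : (μΛΛ'[(fun φ => f (ψ + φ) - g (ψ + φ)) ^ 2])
          = ∫ φ, (f (ψ + φ) - g (ψ + φ)) ^ 2 ∂μΛΛ' := rfl
      have hint : μΛΛ'[fun φ => f (ψ + φ) - g (ψ + φ)]
          = (∫ φ, f (ψ + φ) ∂μΛΛ') - ∫ φ, g (ψ + φ) ∂μΛΛ' := integral_sub hfS hgS
      rw [hsq, hint] at hvar
      rw [hIS, hIT]
      linarith
    · rw [hIS, hIT]
      have habs : |(∫ φ, f (ψ + φ) ∂μΛΛ') - ∫ φ, g (ψ + φ) ∂μΛΛ'| ≤ 1 :=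
        abs_le.mpr ⟨by linarith, by linarith⟩
      nlinarith [sq_abs ((∫ φ, f (ψ + φ) ∂μΛΛ') - ∫ φ, g (ψ + φ) ∂μΛΛ'),
        abs_nonneg ((∫ φ, f (ψ + φ) ∂μΛΛ') - ∫ φ, g (ψ + φ) ∂μΛΛ')]
  -- measurability and integrability over ψ
  have hISm : Measurable fun ψ => ∫ φ, Real.exp (-S (φ + ψ)) ∂μΛΛ' := by
    have h : StronglyMeasurable fun p : (((Fin d → ℤ) → ℝ)) × (((Fin d → ℤ) → ℝ)) =>
        Real.exp (-S (p.2 + p.1)) :=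
      ((hSmeas.comp (measurable_snd.add measurable_fst)).neg.exp).stronglyMeasurable
    exact h.integral_prod_right'.measurable
  have hITm : Measurable fun ψ => ∫ φ, Real.exp (-T (φ + ψ)) ∂μΛΛ' := by
    have h : StronglyMeasurable fun p : (((Fin d → ℤ) → ℝ)) × (((Fin d → ℤ) → ℝ)) =>
        Real.exp (-T (p.2 + p.1)) :=
      ((hTmeas.comp (measurable_snd.add measurable_fst)).neg.exp).stronglyMeasurable
    exact h.integral_prod_right'.measurable
  have hu_meas : Measurable fun ψ =>
      (Real.exp (-integrateOut μΛΛ' S ψ) - Real.exp (-integrateOut μΛΛ' T ψ)) ^ 2 :=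
    ((hISm.log.neg.neg.exp).sub (hITm.log.neg.neg.exp)).pow_const 2
  have hu_int : Integrable (fun ψ =>
      (Real.exp (-integrateOut μΛΛ' S ψ) - Real.exp (-integrateOut μΛΛ' T ψ)) ^ 2) μΛ' := by
    refine Integrable.mono' (integrable_const 1) hu_meas.aestronglyMeasurable ?_
    filter_upwards [hmain] with ψ h
    rw [Real.norm_eq_abs, abs_of_nonneg (sq_nonneg _)]
    exact h.2
  have hfg_int : Integrable (fun χ => (f χ - g χ) ^ 2) μΛ := by
    refine Integrable.mono' (integrable_const 1) hfgm.aestronglyMeasurable ?_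
    filter_upwards [hS0.and hT0] with χ hχ
    rw [Real.norm_eq_abs, abs_of_nonneg (sq_nonneg _)]
    have h1 := hfb χ hχ; have h2 := hgb χ hχ
    nlinarith [h1.1, h1.2, h2.1, h2.2]
  have hF2 : Integrable (fun p : (((Fin d → ℤ) → ℝ)) × (((Fin d → ℤ) → ℝ)) =>
      (f (p.1 + p.2) - g (p.1 + p.2)) ^ 2) (μΛ'.prod μΛΛ') := by
    have hi := hfg_int
    rw [← hconv] at hi
    have h := (integrable_map_measure hfgm.aestronglyMeasurable
      measurable_addPi.aemeasurable).mp hi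
    simpa [Function.comp_def] using h
  have hw_int : Integrable (fun ψ => ∫ φ, (f (ψ + φ) - g (ψ + φ)) ^ 2 ∂μΛΛ') μΛ' := by
    have h := hF2.integral_prod_left
    simpa using h
  have hfg_eq : ∫ ψ, (∫ φ, (f (ψ + φ) - g (ψ + φ)) ^ 2 ∂μΛΛ') ∂μΛ'
      = ∫ χ, (f χ - g χ) ^ 2 ∂μΛ := by
    have hprod_eq := integral_prod (μ := μΛ') (ν := μΛΛ')
      (fun p => (f (p.1 + p.2) - g (p.1 + p.2)) ^ 2) hF2
    simp only at hprod_eq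
    rw [← hprod_eq, ← hconv]
    rw [integral_map measurable_addPi.aemeasurable hfgm.aestronglyMeasurable]
  have hST2 : Integrable (fun χ => (S χ - T χ) ^ 2) μΛ := by
    refine Integrable.mono' ((hS2.const_mul 2).add (hT2.const_mul 2))
      ((hSmeas.sub hTmeas).pow_const 2).aestronglyMeasurable
      (Filter.Eventually.of_forall fun χ => ?_)
    rw [Real.norm_eq_abs, abs_of_nonneg (sq_nonneg _)]
    simp only [Pi.add_apply]
    nlinarith [sq_nonneg (S χ + T χ)]
  calc ∫ ψ, (Real.exp (-integrateOut μΛΛ' S ψ) - Real.exp (-integrateOut μΛΛ' T ψ)) ^ 2 ∂μΛ'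
      ≤ ∫ ψ, (∫ φ, (f (ψ + φ) - g (ψ + φ)) ^ 2 ∂μΛΛ') ∂μΛ' :=
        integral_mono_ae hu_int hw_int (hmain.mono fun ψ h => h.1)
    _ = ∫ χ, (f χ - g χ) ^ 2 ∂μΛ := hfg_eq
    _ ≤ ∫ χ, (S χ - T χ) ^ 2 ∂μΛ := by
        refine integral_mono_ae hfg_int hST2 ?_
        filter_upwards [hS0.and hT0] with χ hχ
        exact exp_neg_sub_sq_le hχ.1 hχ.2
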